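/- The vector field X̃_2 = (1 + e^{τ_1})∂_{τ_1} + (1 + 2e^{τ_1} + e^{τ_2})∂_{τ_2} on ℝ² annihilates the function c̃(τ_1, τ_2) = e^{τ_1}(1 + (e^{τ_1}+1)e^{−τ_2}), i.e. X̃_2 c̃ = 0. -/

import Mathlib

/-- the vector field
`X̃₂ = (1 + e^{τ₁})∂_{τ₁} + (1 + 2e^{τ₁} + e^{τ₂})∂_{τ₂}` on `ℝ²`
annihilates `c̃(τ₁,τ₂) = e^{τ₁}(1 + (e^{τ₁}+1)e^{-τ₂})`. -/
theorem stmt_14 (τ1 τ2 : ℝ) :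
    let c : ℝ → ℝ → ℝ := fun u v =>
      Real.exp u * (1 + (Real.exp u + 1) * Real.exp (-v))
    (1 + Real.exp τ1) * deriv (fun s => c s τ2) τ1
      + (1 + 2 * Real.exp τ1 + Real.exp τ2) * deriv (fun s => c τ1 s) τ2 = 0 := by
  intro c
  have h1 : HasDerivAt (fun s => c s τ2)
      (Real.exp τ1 * (1 + (Real.exp τ1 + 1) * Real.exp (-τ2))
        + Real.exp τ1 * (Real.exp τ1 * Real.exp (-τ2))) τ1 := by
    have := (Real.hasDerivAt_exp τ1).mul
      ((((Real.hasDerivAt_exp τ1).add_const 1).mul_const (Real.exp (-τ2))).const_add 1)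
    exact this
  have hne : HasDerivAt (fun s : ℝ => Real.exp (-s)) (-Real.exp (-τ2)) τ2 := by
    exact ((Real.hasDerivAt_exp (-τ2)).comp τ2 (hasDerivAt_neg τ2)).congr_deriv (by ring)
  have h2 : HasDerivAt (fun s => c τ1 s)
      (Real.exp τ1 * ((Real.exp τ1 + 1) * -Real.exp (-τ2))) τ2 := by
    have := (((hne.const_mul (Real.exp τ1 + 1)).const_add 1).const_mul (Real.exp τ1))
    simpa [c, mul_comm, mul_assoc, mul_left_comm] using this
  rw [h1.deriv, h2.deriv, Real.exp_neg]
  have := (Real.exp_pos τ2).ne'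
  field_simp
  ring
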